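/- Let X and Y be open subsets of ℂ, f₁ : X → ℂ holomorphic with f₁(X) ⊆ Y, and f₂ : Y → ℂ holomorphic. Let A ⊆ X and C ⊆ ℂ be nonempty connected open sets, and assume f₂ ∘ f₁ restricts to a proper map from A to C, i.e. f₂(f₁(A)) ⊆ C and for every compact M ⊆ C the set { z ∈ A : f₂(f₁(z)) ∈ M } is compact. Let B = f₁(A). Then: (1) f₁ restricts to a proper map from A to B; (2) f₂ restricts to a proper map from B to C; (3) B is a connected component of f₂⁻¹(C) = { y ∈ Y : f₂(y) ∈ C }. -/

import Mathlib

set_option maxHeartbeats 1000000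

open Set Filter Metric Topology

/-- if `f₂ ∘ f₁` restricts to a proper map from the nonempty connected
open set `A ⊆ X` to the nonempty connected open set `C`, then with `B = f₁(A)`:
(1) `f₁ : A → B` is proper; (2) `f₂ : B → C` is proper; (3) `B` is a connected
component of `f₂⁻¹(C) = {y ∈ Y | f₂ y ∈ C}`. -/
theorem stmt_15 (X Y : Set ℂ) (hX : IsOpen X) (hY : IsOpen Y)
    (f₁ f₂ : ℂ → ℂ)
    (hf₁ : DifferentiableOn ℂ f₁ X) (hf₂ : DifferentiableOn ℂ f₂ Y)
    (hf₁XY : f₁ '' X ⊆ Y)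
    (A C : Set ℂ) (hAo : IsOpen A) (hCo : IsOpen C)
    (hAc : IsConnected A) (hCc : IsConnected C)
    (hAX : A ⊆ X)
    (hsub : ∀ z ∈ A, f₂ (f₁ z) ∈ C)
    (hproper : ∀ M : Set ℂ, M ⊆ C → IsCompact M → IsCompact {z ∈ A | f₂ (f₁ z) ∈ M}) :
    (∀ K : Set ℂ, K ⊆ f₁ '' A → IsCompact K → IsCompact {z ∈ A | f₁ z ∈ K}) ∧
    (∀ M : Set ℂ, M ⊆ C → IsCompact M → IsCompact {y ∈ f₁ '' A | f₂ y ∈ M}) ∧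
    (∃ x ∈ {y ∈ Y | f₂ y ∈ C}, f₁ '' A = connectedComponentIn {y ∈ Y | f₂ y ∈ C} x) := by
  have hBY : f₁ '' A ⊆ Y := fun y hy => hf₁XY (image_mono (f := f₁) hAX hy)
  have hcont1 : ContinuousOn f₁ A := (hf₁.mono hAX).continuousOn
  have hcont2Y : ContinuousOn f₂ Y := hf₂.continuousOn
  -- A is not compact (it is open, nonempty, and ℂ is connected and noncompact)
  have hAnc : ¬ IsCompact A := by
    intro hA
    have hclopen : IsClopen A := ⟨hA.isClosed, hAo⟩
    have := hclopen.eq_univ (s := A) hAc.nonempty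
    rw [this] at hA
    exact hA.ne_univ rfl
  -- part 1
  have part1 : ∀ K : Set ℂ, K ⊆ f₁ '' A → IsCompact K → IsCompact {z ∈ A | f₁ z ∈ K} := by
    intro K hKB hK
    have hKY : K ⊆ Y := hKB.trans hBY
    have hM : IsCompact (f₂ '' K) := hK.image_of_continuousOn (hcont2Y.mono hKY)
    have hMC : f₂ '' K ⊆ C := by
      rintro _ ⟨y, hy, rfl⟩
      obtain ⟨z, hz, rfl⟩ := hKB hy
      exact hsub z hz
    have hS : IsCompact {z ∈ A | f₂ (f₁ z) ∈ f₂ '' K} := hproper _ hMC hM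
    -- get an open set u with f₁ ⁻¹' Kᶜ ∩ A = u ∩ A
    obtain ⟨u, huo, huA⟩ := (_root_.continuousOn_iff'.mp hcont1) Kᶜ hK.isClosed.isOpen_compl
    have hTeq : {z ∈ A | f₁ z ∈ K} = {z ∈ A | f₂ (f₁ z) ∈ f₂ '' K} ∩ uᶜ := by
      ext z
      constructor
      · rintro ⟨hzA, hzK⟩
        refine ⟨⟨hzA, ⟨f₁ z, hzK, rfl⟩⟩, fun hzu => ?_⟩
        have : z ∈ f₁ ⁻¹' Kᶜ ∩ A := huA ▸ ⟨hzu, hzA⟩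
        exact this.1 hzK
      · rintro ⟨⟨hzA, -⟩, hzu⟩
        refine ⟨hzA, by_contra fun hzK => ?_⟩
        have : z ∈ u ∩ A := huA ▸ ⟨hzK, hzA⟩
        exact hzu this.1
    rw [hTeq]
    exact hS.inter_right huo.isClosed_compl
  refine ⟨part1, ?_, ?_⟩
  -- part 2
  · intro M hMC hM
    have h2 : {y ∈ f₁ '' A | f₂ y ∈ M} = f₁ '' {z ∈ A | f₂ (f₁ z) ∈ M} := by
      ext y
      constructor
      · rintro ⟨⟨z, hz, rfl⟩, hy⟩
        exact ⟨z, ⟨hz, hy⟩, rfl⟩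
      · rintro ⟨z, ⟨hz, hzM⟩, rfl⟩
        exact ⟨⟨z, hz, rfl⟩, hzM⟩
    rw [h2]
    exact (hproper M hMC hM).image_of_continuousOn (hcont1.mono fun z hz => hz.1)
  -- part 3
  · set P : Set ℂ := {y ∈ Y | f₂ y ∈ C} with hP
    have hPo : IsOpen P := hcont2Y.isOpen_inter_preimage hY hCo
    have hBP : f₁ '' A ⊆ P := by
      rintro _ ⟨z, hz, rfl⟩
      exact ⟨hBY ⟨z, hz, rfl⟩, hsub z hz⟩
    -- f₁ is nonconstant on A, so B is open
    have hBo : IsOpen (f₁ '' A) := by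
      have han : AnalyticOnNhd ℂ f₁ A := (hf₁.mono hAX).analyticOnNhd hAo
      rcases han.is_constant_or_isOpen hAc.isPreconnected with ⟨w, hw⟩ | hopen
      · exfalso
        apply hAnc
        have hwC : f₂ w ∈ C := by
          obtain ⟨a, ha⟩ := hAc.nonempty
          simpa [hw a ha] using hsub a ha
        have : A = {z ∈ A | f₂ (f₁ z) ∈ ({f₂ w} : Set ℂ)} := by
          ext z; simp only [mem_setOf_eq, mem_singleton_iff]
          exact ⟨fun hz => ⟨hz, by rw [hw z hz]⟩, fun hz => hz.1⟩
        rw [this]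
        exact hproper _ (Set.singleton_subset_iff.mpr hwC) isCompact_singleton
      · exact hopen A subset_rfl hAo
    -- B is closed in P
    have hclosed : ∀ y ∈ P, y ∈ closure (f₁ '' A) → y ∈ f₁ '' A := by
      intro y hyP hycl
      obtain ⟨hyY, hyC⟩ := hyP
      obtain ⟨ε, hε, hball⟩ := Metric.isOpen_iff.mp hCo _ hyC
      have hMc : closedBall (f₂ y) (ε / 2) ⊆ C :=
        (closedBall_subset_ball (by linarith)).trans hball
      have hK0 : IsCompact {z ∈ A | f₂ (f₁ z) ∈ closedBall (f₂ y) (ε / 2)} :=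
        hproper _ hMc (isCompact_closedBall _ _)
      obtain ⟨u, hu, hul⟩ := mem_closure_iff_seq_limit.mp hycl
      have hf₂y : ContinuousAt f₂ y := hcont2Y.continuousAt (hY.mem_nhds hyY)
      have hev : ∀ᶠ n in atTop, f₂ (u n) ∈ closedBall (f₂ y) (ε / 2) :=
        (hf₂y.tendsto.comp hul) (closedBall_mem_nhds _ (by linarith))
      obtain ⟨n₀, hn₀⟩ := eventually_atTop.mp hev
      choose z hzA hz using fun n => hu n
      have hw : ∀ n, z (n + n₀) ∈ {z ∈ A | f₂ (f₁ z) ∈ closedBall (f₂ y) (ε / 2)} := by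
        intro n
        exact ⟨hzA _, by rw [hz]; exact hn₀ _ (Nat.le_add_left _ _)⟩
      obtain ⟨a, haK, φ, hφ, hlim⟩ := hK0.tendsto_subseq hw
      have haA : a ∈ A := haK.1
      have hf₁a : ContinuousAt f₁ a := hcont1.continuousAt (hAo.mem_nhds haA)
      have hlim1 : Tendsto (fun n => f₁ (z (φ n + n₀))) atTop (𝓝 (f₁ a)) :=
        hf₁a.tendsto.comp hlim
      have hlim2 : Tendsto (fun n => f₁ (z (φ n + n₀))) atTop (𝓝 y) := by
        have : Tendsto (fun n => u (φ n + n₀)) atTop (𝓝 y) :=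
          hul.comp ((tendsto_add_atTop_nat n₀).comp hφ.tendsto_atTop)
        simpa only [hz] using this
      exact ⟨a, haA, tendsto_nhds_unique hlim1 hlim2⟩
    obtain ⟨a₀, ha₀⟩ := hAc.nonempty
    have hxB : f₁ a₀ ∈ f₁ '' A := ⟨a₀, ha₀, rfl⟩
    have hxP : f₁ a₀ ∈ P := hBP hxB
    refine ⟨f₁ a₀, hxP, ?_⟩
    have hsub1 : f₁ '' A ⊆ connectedComponentIn P (f₁ a₀) :=
      (hAc.image _ hcont1).isPreconnected.subset_connectedComponentIn hxB hBP
    refine hsub1.antisymm ?_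
    have hpre : IsPreconnected (connectedComponentIn P (f₁ a₀)) :=
      isPreconnected_connectedComponentIn
    have hsuv : connectedComponentIn P (f₁ a₀) ⊆ f₁ '' A ∪ (closure (f₁ '' A))ᶜ := by
      intro p hp
      by_cases hpc : p ∈ closure (f₁ '' A)
      · exact Or.inl (hclosed p (connectedComponentIn_subset P _ hp) hpc)
      · exact Or.inr hpc
    exact hpre.subset_left_of_subset_union hBo isClosed_closure.isOpen_compl
      (disjoint_compl_right.mono_left subset_closure) hsuv
      ⟨f₁ a₀, mem_connectedComponentIn hxP, hxB⟩
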